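/- With 𝒦 as above, suppose there exists λ ∈ ℝⁿ with μ(D ∩ [(Hλ)(x) ≠ 0]) > 0. Then there exists c > 0 such that for every λ ∈ ℝⁿ with μ(D ∩ [(Hλ)(x) ≠ 0]) > 0, ‖Hλ‖_{L^∞(μ_D)} / ‖λ^⊥‖₁ > c, where λ^⊥ is the orthogonal projection of λ onto 𝒦^⊥ and μ_D(S) := μ(D ∩ S). -/

import Mathlib

open MeasureTheory ENNReal

theorem projection_norm_ratio_bounded_below
    {X : Type*} [MeasurableSpace X]
    (μ : Measure (X × ℝ)) [IsProbabilityMeasure μ]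
    (n : ℕ) (h : Fin n → X → ℝ)
    (hmeas : ∀ i, Measurable (h i)) (hbd : ∀ i x, |h i x| ≤ 1)
    (D : Set (X × ℝ)) (hD : MeasurableSet D)
    (K : Submodule ℝ (EuclideanSpace ℝ (Fin n)))
    (hK : ∀ lam : EuclideanSpace ℝ (Fin n),
      lam ∈ K ↔ ∀ᵐ z ∂μ, z ∈ D → z.2 * (∑ j, lam j * h j z.1) = 0)
    (hex : ∃ lam : EuclideanSpace ℝ (Fin n),
      0 < μ (D ∩ {z | (∑ j, lam j * h j z.1) ≠ 0})) :
    ∃ c : ℝ, 0 < c ∧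
      ∀ lam : EuclideanSpace ℝ (Fin n),
        0 < μ (D ∩ {z | (∑ j, lam j * h j z.1) ≠ 0}) →
        ENNReal.ofReal
            (c * ∑ j, |(Submodule.orthogonalProjection Kᗮ lam : EuclideanSpace ℝ (Fin n)) j|)
          < essSup (fun z => ENNReal.ofReal |∑ j, lam j * h j z.1|)
              (μ.restrict D) := by
  classical
  set F : (EuclideanSpace ℝ (Fin n)) → (X × ℝ) → ℝ := fun lam z => ∑ j, lam j * h j z.1 with hF
  set ν := μ.restrict D with hν
  have hFmeas : ∀ lam : (EuclideanSpace ℝ (Fin n)), Measurable (F lam) := fun lam =>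
    Finset.measurable_sum _ fun j _ => ((hmeas j).comp measurable_fst).const_mul _
  have hFbd : ∀ (lam : (EuclideanSpace ℝ (Fin n))) z, |F lam z| ≤ ∑ j, |lam j| := by
    intro lam z
    calc |∑ j, lam j * h j z.1| ≤ ∑ j, |lam j * h j z.1| :=
          Finset.abs_sum_le_sum_abs _ _
      _ ≤ ∑ j, |lam j| := Finset.sum_le_sum fun j _ => by
          rw [abs_mul]
          calc |lam j| * |h j z.1| ≤ |lam j| * 1 := by
                have := hbd j z.1
                nlinarith [abs_nonneg (lam j)]
            _ = |lam j| := mul_one _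
  have hmem : ∀ lam : (EuclideanSpace ℝ (Fin n)), MemLp (F lam) ∞ ν := fun lam =>
    memLp_top_of_bound (hFmeas lam).aestronglyMeasurable _
      (Filter.Eventually.of_forall fun z => by
        simpa [Real.norm_eq_abs] using hFbd lam z)
  have hfin : ∀ lam : (EuclideanSpace ℝ (Fin n)), eLpNorm (F lam) ∞ ν ≠ ⊤ := fun lam => (hmem lam).eLpNorm_ne_top
  set G : (EuclideanSpace ℝ (Fin n)) → ℝ := fun lam => (eLpNorm (F lam) ∞ ν).toReal with hG
  have hGnonneg : ∀ lam, 0 ≤ G lam := fun lam => ENNReal.toReal_nonneg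
  have hFadd : ∀ a b : (EuclideanSpace ℝ (Fin n)), F (a + b) = F a + F b := by
    intro a b; funext z
    simp [hF, PiLp.add_apply, add_mul, Finset.sum_add_distrib]
  have hFsmul : ∀ (r : ℝ) (a : (EuclideanSpace ℝ (Fin n))), F (r • a) = r • F a := by
    intro r a; funext z
    simp [hF, PiLp.smul_apply, Finset.mul_sum, mul_assoc, smul_eq_mul]
  have hGadd : ∀ a b : (EuclideanSpace ℝ (Fin n)), G (a + b) ≤ G a + G b := by
    intro a b
    have h1 := eLpNorm_add_le (μ := ν) (p := ∞) (hFmeas a).aestronglyMeasurable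
      (hFmeas b).aestronglyMeasurable le_top
    rw [← hFadd] at h1
    calc G (a + b) ≤ (eLpNorm (F a) ∞ ν + eLpNorm (F b) ∞ ν).toReal :=
          ENNReal.toReal_mono (ENNReal.add_ne_top.mpr ⟨hfin a, hfin b⟩) h1
      _ = G a + G b := ENNReal.toReal_add (hfin a) (hfin b)
  have hGsmul : ∀ (r : ℝ) (a : (EuclideanSpace ℝ (Fin n))), G (r • a) = |r| * G a := by
    intro r a
    simp only [hG, hFsmul, eLpNorm_const_smul, ENNReal.toReal_mul]
    simp [Real.norm_eq_abs, abs_abs]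
  have hcoord : ∀ (w : (EuclideanSpace ℝ (Fin n))) (j : Fin n), |w j| ≤ ‖w‖ := by
    intro w j
    rw [EuclideanSpace.norm_eq]
    calc |w j| = Real.sqrt (‖w j‖ ^ 2) := by
          rw [Real.norm_eq_abs, Real.sqrt_sq_eq_abs, abs_abs]
      _ ≤ Real.sqrt (∑ i, ‖w i‖ ^ 2) :=
          Real.sqrt_le_sqrt (Finset.single_le_sum (f := fun i => ‖w i‖ ^ 2) (fun i _ => sq_nonneg _) (Finset.mem_univ j))
  have hsumabs : ∀ w : (EuclideanSpace ℝ (Fin n)), ∑ j, |w j| ≤ (n : ℝ) * ‖w‖ := by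
    intro w
    calc ∑ j, |w j| ≤ ∑ _j : Fin n, ‖w‖ := Finset.sum_le_sum fun j _ => hcoord w j
      _ = (n : ℝ) * ‖w‖ := by simp [Finset.sum_const, nsmul_eq_mul]
  have hGle : ∀ lam : (EuclideanSpace ℝ (Fin n)), G lam ≤ ∑ j, |lam j| := by
    intro lam
    have h1 : eLpNorm (F lam) ∞ ν ≤ ENNReal.ofReal (∑ j, |lam j|) := by
      have h2 := eLpNorm_le_of_ae_bound (μ := ν) (p := ∞) (f := F lam)
        (C := ∑ j, |lam j|)
        (Filter.Eventually.of_forall fun z => by simpa [Real.norm_eq_abs] using hFbd lam z)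
      simpa using h2
    calc G lam ≤ (ENNReal.ofReal (∑ j, |lam j|)).toReal :=
          ENNReal.toReal_mono ENNReal.ofReal_ne_top h1
      _ ≤ ∑ j, |lam j| := (ENNReal.toReal_ofReal (by positivity)).le
  have hGle' : ∀ lam : (EuclideanSpace ℝ (Fin n)), G lam ≤ (n : ℝ) * ‖lam‖ := fun lam => (hGle lam).trans (hsumabs lam)
  have hGneg : ∀ a : (EuclideanSpace ℝ (Fin n)), G (-a) = G a := by
    intro a
    have := hGsmul (-1) a
    simpa using this
  have hGsub : ∀ a b : (EuclideanSpace ℝ (Fin n)), G a - G b ≤ G (a - b) := by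
    intro a b
    have h1 := hGadd (a - b) b
    rw [sub_add_cancel] at h1
    linarith
  have hGcont : Continuous G := by
    refine (LipschitzWith.of_dist_le_mul (K := (n : NNReal)) (f := G) fun a b => ?_).continuous
    rw [Real.dist_eq, dist_eq_norm]
    have h1 : G a - G b ≤ G (a - b) := hGsub a b
    have h2 : G b - G a ≤ G (a - b) := by
      have := hGsub b a
      rw [show b - a = -(a - b) from (neg_sub a b).symm, hGneg] at this
      linarith
    have h3 : |G a - G b| ≤ G (a - b) := abs_sub_le_iff.mpr ⟨h1, h2⟩
    calc |G a - G b| ≤ G (a - b) := h3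
      _ ≤ (n : ℝ) * ‖a - b‖ := hGle' _
      _ = ((n : NNReal) : ℝ) * ‖a - b‖ := by norm_num
  have hGzero_iff : ∀ lam : (EuclideanSpace ℝ (Fin n)), G lam = 0 ↔ ∀ᵐ z ∂ν, F lam z = 0 := by
    intro lam
    constructor
    · intro h0
      have h1 : eLpNorm (F lam) ∞ ν = 0 := by
        rcases ENNReal.toReal_eq_zero_iff _ |>.mp h0 with h2 | h2
        · exact h2
        · exact absurd h2 (hfin lam)
      have h2 := (eLpNorm_eq_zero_iff (hFmeas lam).aestronglyMeasurable (by simp)).mp h1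
      exact h2.mono fun z hz => hz
    · intro h0
      have h1 : eLpNorm (F lam) ∞ ν = 0 :=
        (eLpNorm_eq_zero_iff (hFmeas lam).aestronglyMeasurable (by simp)).mpr
          (h0.mono fun z hz => hz)
      simp only [hG]
      rw [h1]
      rfl
  set N : Submodule ℝ (EuclideanSpace ℝ (Fin n)) :=
    { carrier := {lam | G lam = 0}
      add_mem' := by
        intro a b ha hb
        simp only [Set.mem_setOf_eq] at ha hb ⊢
        have h1 := hGadd a b
        have h2 := hGnonneg (a + b)
        linarith
      zero_mem' := by
        have := hGsmul 0 0
        simpa using this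
      smul_mem' := by
        intro r a ha
        simp only [Set.mem_setOf_eq] at ha ⊢
        rw [hGsmul, ha, mul_zero] } with hN
  have hNmem : ∀ lam : (EuclideanSpace ℝ (Fin n)), lam ∈ N ↔ G lam = 0 := fun _ => Iff.rfl
  have hNK : N ≤ K := by
    intro lam hlam
    rw [hK]
    have h0 : ∀ᵐ z ∂ν, F lam z = 0 := (hGzero_iff lam).mp hlam
    rw [hν, ae_restrict_iff' hD] at h0
    exact h0.mono fun z hz hzD => by
      rw [show (∑ j, lam j * h j z.1) = F lam z from rfl, hz hzD, mul_zero]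
  have hGpos : ∀ lam : (EuclideanSpace ℝ (Fin n)), 0 < μ (D ∩ {z | (∑ j, lam j * h j z.1) ≠ 0}) → 0 < G lam := by
    intro lam hpos
    rcases eq_or_lt_of_le (hGnonneg lam) with h0 | h0
    · exfalso
      have hae := (hGzero_iff lam).mp h0.symm
      have hnull : ν {z | F lam z ≠ 0} = 0 := by
        simpa [ae_iff] using hae
      rw [hν, Measure.restrict_apply' hD, Set.inter_comm] at hnull
      rw [show {z | F lam z ≠ 0} = {z : X × ℝ | (∑ j, lam j * h j z.1) ≠ 0} from rfl] at hnull
      exact absurd hnull hpos.ne'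
    · exact h0
  have hfd : FiniteDimensional ℝ (EuclideanSpace ℝ (Fin n)) := by infer_instance
  obtain ⟨c₁, hc₁pos, hc₁⟩ : ∃ c₁ : ℝ, 0 < c₁ ∧ ∀ v : (EuclideanSpace ℝ (Fin n)), v ∈ Nᗮ → c₁ * ‖v‖ ≤ G v := by
    by_cases hS : ∃ v : (EuclideanSpace ℝ (Fin n)), v ∈ Nᗮ ∧ ‖v‖ = 1
    · set S : Set (EuclideanSpace ℝ (Fin n)) := (Nᗮ : Set (EuclideanSpace ℝ (Fin n))) ∩ Metric.sphere 0 1 with hSdef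
      have hScpt : IsCompact S := by
        have h2 : IsCompact (Metric.sphere (0 : (EuclideanSpace ℝ (Fin n))) 1) := isCompact_sphere 0 1
        exact h2.inter_left (Submodule.closed_of_finiteDimensional _)
      have hSne : S.Nonempty := by
        obtain ⟨v, hv1, hv2⟩ := hS
        exact ⟨v, hv1, by simpa [mem_sphere_zero_iff_norm] using hv2⟩
      obtain ⟨v₀, hv₀S, hv₀min⟩ := hScpt.exists_isMinOn hSne hGcont.continuousOn
      have hv₀norm : ‖v₀‖ = 1 := by
        have := hv₀S.2
        simpa [mem_sphere_zero_iff_norm] using this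
      have hv₀pos : 0 < G v₀ := by
        rcases eq_or_lt_of_le (hGnonneg v₀) with h0 | h0
        · exfalso
          have hmemN : v₀ ∈ N := (hNmem v₀).mpr h0.symm
          have h1 : (inner ℝ v₀ v₀ : ℝ) = 0 := (Submodule.mem_orthogonal _ _).mp hv₀S.1 v₀ hmemN
          have h2 : v₀ = 0 := inner_self_eq_zero.mp h1
          rw [h2] at hv₀norm
          simp at hv₀norm
        · exact h0
      refine ⟨G v₀, hv₀pos, fun v hv => ?_⟩
      by_cases hv0 : v = 0
      · simpa [hv0] using hGnonneg 0
      · have hvnorm : 0 < ‖v‖ := norm_pos_iff.mpr hv0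
        set u : (EuclideanSpace ℝ (Fin n)) := ‖v‖⁻¹ • v with hu
        have huS : u ∈ S := by
          refine ⟨Submodule.smul_mem _ _ hv, ?_⟩
          rw [mem_sphere_zero_iff_norm, hu, norm_smul]
          simp [abs_of_pos (inv_pos.mpr hvnorm), inv_mul_cancel₀ hvnorm.ne']
        have h1 : G v₀ ≤ G u := hv₀min huS
        have h2 : G u = ‖v‖⁻¹ * G v := by
          rw [hu, hGsmul, abs_of_pos (inv_pos.mpr hvnorm)]
        have h3 : G v₀ ≤ ‖v‖⁻¹ * G v := h2 ▸ h1
        calc G v₀ * ‖v‖ ≤ (‖v‖⁻¹ * G v) * ‖v‖ :=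
              mul_le_mul_of_nonneg_right h3 hvnorm.le
          _ = G v := by field_simp
    · refine ⟨1, one_pos, fun v hv => ?_⟩
      have hv0 : v = 0 := by
        by_contra hne
        have hvnorm : 0 < ‖v‖ := norm_pos_iff.mpr hne
        exact hS ⟨‖v‖⁻¹ • v, Submodule.smul_mem _ _ hv, by
          rw [norm_smul]
          simp [abs_of_pos (inv_pos.mpr hvnorm), inv_mul_cancel₀ hvnorm.ne']⟩
      simpa [hv0] using hGnonneg 0
  refine ⟨c₁ / (2 * ((n : ℝ) + 1)), by positivity, fun lam hpos => ?_⟩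
  have hGlam : 0 < G lam := hGpos lam hpos
  set v : (EuclideanSpace ℝ (Fin n)) := (Submodule.orthogonalProjection Nᗮ lam : (EuclideanSpace ℝ (Fin n))) with hv
  have hvmem : v ∈ Nᗮ := (Submodule.orthogonalProjection Nᗮ lam).2
  have hlamv : lam - v ∈ N := by
    have h1 : lam - v ∈ Nᗮᗮ := Submodule.sub_starProjection_mem_orthogonal (K := Nᗮ) lam
    rwa [Submodule.orthogonal_orthogonal] at h1
  have hGv_le : G v ≤ G lam := by
    have h1 : v - lam ∈ N := by
      have := N.neg_mem hlamv
      rwa [neg_sub] at this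
    have h2 : G (v - lam) = 0 := (hNmem _).mp h1
    calc G v = G (lam + (v - lam)) := by rw [add_sub_cancel]
      _ ≤ G lam + G (v - lam) := hGadd _ _
      _ = G lam := by rw [h2, add_zero]
  have hproj : (Submodule.orthogonalProjection Kᗮ lam : (EuclideanSpace ℝ (Fin n))) = (Submodule.orthogonalProjection Kᗮ v : (EuclideanSpace ℝ (Fin n))) := by
    have hsub : lam - v ∈ (Kᗮ)ᗮ := K.le_orthogonal_orthogonal (hNK hlamv)
    have h0 : Submodule.orthogonalProjection Kᗮ (lam - v) = 0 :=
      Submodule.orthogonalProjectionOnto_apply_of_mem_orthogonal hsub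
    have h1 : Submodule.orthogonalProjection Kᗮ lam = Submodule.orthogonalProjection Kᗮ v := by
      rw [← sub_eq_zero, ← map_sub, h0]
    rw [h1]
  have hprojnorm : ‖(Submodule.orthogonalProjection Kᗮ v : (EuclideanSpace ℝ (Fin n)))‖ ≤ ‖v‖ := by
    have h1 := (Submodule.orthogonalProjection Kᗮ).le_opNorm v
    have h2 : ‖Submodule.orthogonalProjection Kᗮ‖ ≤ 1 := Submodule.orthogonalProjectionOnto_norm_le (K := Kᗮ)
    have h3 : ‖(Submodule.orthogonalProjection Kᗮ v : (EuclideanSpace ℝ (Fin n)))‖ = ‖Submodule.orthogonalProjection Kᗮ v‖ := rfl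
    rw [h3]
    nlinarith [norm_nonneg v, norm_nonneg (Submodule.orthogonalProjection Kᗮ v)]
  have hsum_le : (∑ j, |(Submodule.orthogonalProjection Kᗮ lam : (EuclideanSpace ℝ (Fin n))) j|) ≤ (n : ℝ) * ‖v‖ := by
    calc (∑ j, |(Submodule.orthogonalProjection Kᗮ lam : (EuclideanSpace ℝ (Fin n))) j|)
        ≤ (n : ℝ) * ‖(Submodule.orthogonalProjection Kᗮ lam : (EuclideanSpace ℝ (Fin n)))‖ := hsumabs _
      _ = (n : ℝ) * ‖(Submodule.orthogonalProjection Kᗮ v : (EuclideanSpace ℝ (Fin n)))‖ := by rw [hproj]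
      _ ≤ (n : ℝ) * ‖v‖ := by
          have := hprojnorm
          nlinarith [Nat.cast_nonneg (α := ℝ) n]
  have hvGv : c₁ * ‖v‖ ≤ G lam := (hc₁ v hvmem).trans hGv_le
  have hreal : c₁ / (2 * ((n : ℝ) + 1)) * (∑ j, |(Submodule.orthogonalProjection Kᗮ lam : (EuclideanSpace ℝ (Fin n))) j|)
      < G lam := by
    have hfrac : (n : ℝ) / (2 * ((n : ℝ) + 1)) < 1 := by
      rw [div_lt_one (by positivity)]
      linarith [Nat.cast_nonneg (α := ℝ) n]
    have hfrac0 : 0 ≤ (n : ℝ) / (2 * ((n : ℝ) + 1)) := by positivity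
    have hc : 0 < c₁ / (2 * ((n : ℝ) + 1)) := by positivity
    calc c₁ / (2 * ((n : ℝ) + 1)) * (∑ j, |(Submodule.orthogonalProjection Kᗮ lam : (EuclideanSpace ℝ (Fin n))) j|)
        ≤ c₁ / (2 * ((n : ℝ) + 1)) * ((n : ℝ) * ‖v‖) :=
          mul_le_mul_of_nonneg_left hsum_le hc.le
      _ = (n : ℝ) / (2 * ((n : ℝ) + 1)) * (c₁ * ‖v‖) := by ring
      _ ≤ (n : ℝ) / (2 * ((n : ℝ) + 1)) * G lam :=
          mul_le_mul_of_nonneg_left hvGv hfrac0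
      _ < G lam := mul_lt_of_lt_one_left hGlam hfrac
  have hEq : essSup (fun z => ENNReal.ofReal |∑ j, lam j * h j z.1|) (μ.restrict D)
      = eLpNorm (F lam) ∞ ν := by
    rw [eLpNorm_exponent_top, eLpNormEssSup]
    congr 1
    funext z
    rw [show (∑ j, lam j * h j z.1) = F lam z from rfl, ← Real.enorm_eq_ofReal_abs]
  rw [hEq, ENNReal.ofReal_lt_iff_lt_toReal (by positivity) (hfin lam)]
  exact hreal
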